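/- Let k be an algebraically closed field of characteristic zero, let p, q, ℓ ≥ 1 be integers with p and q coprime, let a_00,…,a_ℓℓ, b_00,…,b_ℓℓ ∈ k with q·a_ℓℓ + p·b_ℓℓ ≠ 0, and set a₁ = Σ_{i=0}^ℓ a_ii·x^{qi}·y^{pi}, b₁ = Σ_{i=0}^ℓ b_ii·x^{qi}·y^{pi} and D = p·x·a₁·∂x + q·y·b₁·∂y. If {a_00, b_00} is linearly independent over ℚ (i.e. m·a_00 + n·b_00 = 0 with m, n ∈ ℤ forces m = n = 0), then D has, up to k*-scalar multiples, only finitely many irreducible eigenvectors: there is a finite set S ⊂ k[x,y] such that every irreducible eigenvector of D is a scalar multiple of an element of S. -/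

import Mathlib

open MvPolynomial Finset

namespace EigAux

variable {k : Type*} [CommRing k]

/-- the exponent vector of `x^{qi} y^{pi}` -/
noncomputable def sfn (p q i : ℕ) : Fin 2 →₀ ℕ := Finsupp.single 0 (q*i) + Finsupp.single 1 (p*i)

lemma sfn_apply0 (p q i : ℕ) : sfn p q i 0 = q * i := by
  simp [sfn]

lemma sfn_apply1 (p q i : ℕ) : sfn p q i 1 = p * i := by
  simp [sfn]

lemma sfn_zero (p q : ℕ) : sfn p q 0 = 0 := by
  simp [sfn]

lemma sfn_add (p q i j : ℕ) : sfn p q i + sfn p q j = sfn p q (i + j) := by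
  ext a
  fin_cases a <;> simp [sfn] <;> ring

lemma eq_sfn_of_apply (p q : ℕ) (d : Fin 2 →₀ ℕ) (i : ℕ) (h0 : d 0 = q * i)
    (h1 : d 1 = p * i) : d = sfn p q i := by
  ext a
  fin_cases a
  · simpa [sfn] using h0
  · simpa [sfn] using h1

lemma monomial_sfn (p q i : ℕ) :
    (X 0 : MvPolynomial (Fin 2) k) ^ (q * i) * X 1 ^ (p * i) = monomial (sfn p q i) 1 := by
  rw [X_pow_eq_monomial, X_pow_eq_monomial, monomial_mul, one_mul, sfn]

end EigAux
namespace EigAux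

variable {k : Type*} [CommRing k]

lemma X_mul_pderiv_monomial (j : Fin 2) (d : Fin 2 →₀ ℕ) (c : k) :
    (X j : MvPolynomial (Fin 2) k) * pderiv j (monomial d c) = monomial d (c * d j) := by
  rw [pderiv_monomial]
  by_cases h : d j = 0
  · simp [h]
  · have hle : Finsupp.single j 1 ≤ d := by
      rw [Finsupp.single_le_iff]
      omega
    rw [X, monomial_mul, one_mul, add_tsub_cancel_of_le hle]

end EigAux

namespace EigAux
variable {k : Type*} [CommRing k]

lemma key_mul (p q ℓ : ℕ) (E : ℕ → k) (j : Fin 2) (w : ℕ) (d : Fin 2 →₀ ℕ) (c : k) :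
    (w : MvPolynomial (Fin 2) k) * X j *
      (∑ i ∈ Finset.range (ℓ + 1), C (E i) * X 0 ^ (q * i) * X 1 ^ (p * i)) *
        pderiv j (monomial d c) =
    ∑ i ∈ Finset.range (ℓ + 1), monomial (d + sfn p q i) (c * ((w * d j : ℕ) * E i)) := by
  have h1 : (w : MvPolynomial (Fin 2) k) * X j *
      (∑ i ∈ Finset.range (ℓ + 1), C (E i) * X 0 ^ (q * i) * X 1 ^ (p * i)) *
        pderiv j (monomial d c) =
      (∑ i ∈ Finset.range (ℓ + 1), C (E i) * X 0 ^ (q * i) * X 1 ^ (p * i)) *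
        ((w : MvPolynomial (Fin 2) k) * (X j * pderiv j (monomial d c))) := by ring
  rw [h1, X_mul_pderiv_monomial, Finset.sum_mul]
  refine Finset.sum_congr rfl fun i _ => ?_
  rw [mul_assoc (C (E i)), monomial_sfn, C_mul_monomial,
    show ((w : MvPolynomial (Fin 2) k)) = C ((w : k)) from (map_natCast C w).symm,
    C_mul_monomial, monomial_mul, add_comm (sfn p q i) d]
  congr 1
  push_cast
  ring

end EigAux
namespace EigAux
variable {k : Type*} [CommRing k]

lemma Dmono (p q ℓ : ℕ) (A B : ℕ → k)
    (D : Derivation k (MvPolynomial (Fin 2) k) (MvPolynomial (Fin 2) k))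
    (hD : ∀ f, D f =
      (p : MvPolynomial (Fin 2) k) * X 0 *
        (∑ i ∈ Finset.range (ℓ + 1), C (A i) * X 0 ^ (q * i) * X 1 ^ (p * i)) *
          pderiv (0 : Fin 2) f +
      (q : MvPolynomial (Fin 2) k) * X 1 *
        (∑ i ∈ Finset.range (ℓ + 1), C (B i) * X 0 ^ (q * i) * X 1 ^ (p * i)) *
          pderiv (1 : Fin 2) f) (d : Fin 2 →₀ ℕ) (c : k) :
    D (monomial d c) = ∑ i ∈ Finset.range (ℓ + 1),
      monomial (d + sfn p q i) (c * (((p * d 0 : ℕ) : k) * A i + ((q * d 1 : ℕ) : k) * B i)) := by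
  rw [hD, key_mul p q ℓ A 0 p d c, key_mul p q ℓ B 1 q d c, ← Finset.sum_add_distrib]
  refine Finset.sum_congr rfl fun i _ => ?_
  rw [← map_add]
  congr 1
  ring

end EigAux
namespace EigAux
variable {k : Type*} [CommRing k]

section D
variable (p q ℓ : ℕ) (A B : ℕ → k)
    (D : Derivation k (MvPolynomial (Fin 2) k) (MvPolynomial (Fin 2) k))
    (hD : ∀ f, D f =
      (p : MvPolynomial (Fin 2) k) * X 0 *
        (∑ i ∈ Finset.range (ℓ + 1), C (A i) * X 0 ^ (q * i) * X 1 ^ (p * i)) *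
          pderiv (0 : Fin 2) f +
      (q : MvPolynomial (Fin 2) k) * X 1 *
        (∑ i ∈ Finset.range (ℓ + 1), C (B i) * X 0 ^ (q * i) * X 1 ^ (p * i)) *
          pderiv (1 : Fin 2) f)

include hD

lemma Dg_eq (g : MvPolynomial (Fin 2) k) :
    D g = ∑ d ∈ g.support, ∑ i ∈ Finset.range (ℓ + 1),
      monomial (d + sfn p q i)
        (coeff d g * (((p * d 0 : ℕ) : k) * A i + ((q * d 1 : ℕ) : k) * B i)) := by
  conv_lhs => rw [← support_sum_monomial_coeff g]
  rw [map_sum]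
  exact Finset.sum_congr rfl fun d _ => Dmono p q ℓ A B D hD d (coeff d g)

lemma D_support {g : MvPolynomial (Fin 2) k} {e : Fin 2 →₀ ℕ} (he : e ∈ (D g).support) :
    ∃ d ∈ g.support, ∃ i ∈ Finset.range (ℓ + 1), e = d + sfn p q i := by
  rw [Dg_eq p q ℓ A B D hD] at he
  obtain ⟨d, hd, he2⟩ := Finset.mem_biUnion.1 (MvPolynomial.support_sum he)
  obtain ⟨i, hi, he3⟩ := Finset.mem_biUnion.1 (MvPolynomial.support_sum he2)
  refine ⟨d, hd, i, hi, ?_⟩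
  have := MvPolynomial.support_monomial_subset he3
  simpa using this

lemma D_coeff_min {g : MvPolynomial (Fin 2) k} {e : Fin 2 →₀ ℕ}
    (hmin : ∀ d ∈ g.support, ∀ i ∈ Finset.range (ℓ + 1), d + sfn p q i = e → i = 0) :
    coeff e (D g) =
      (((p * e 0 : ℕ) : k) * A 0 + ((q * e 1 : ℕ) : k) * B 0) * coeff e g := by
  rw [Dg_eq p q ℓ A B D hD]
  simp only [MvPolynomial.coeff_sum]
  have step : ∀ d ∈ g.support,
      (∑ i ∈ Finset.range (ℓ + 1), coeff e (monomial (d + sfn p q i)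
        (coeff d g * (((p * d 0 : ℕ) : k) * A i + ((q * d 1 : ℕ) : k) * B i))))
      = if d = e then
          coeff d g * (((p * d 0 : ℕ) : k) * A 0 + ((q * d 1 : ℕ) : k) * B 0) else 0 := by
    intro d hd
    rw [Finset.sum_eq_single_of_mem 0 (Finset.mem_range.2 (Nat.succ_pos ℓ))]
    · rw [coeff_monomial, sfn_zero, add_zero]
    · intro i hi hi0
      rw [coeff_monomial, if_neg]
      intro hee
      exact hi0 (hmin d hd i hi hee)
  rw [Finset.sum_congr rfl step, Finset.sum_ite_eq' g.support e]
  by_cases he : e ∈ g.support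
  · rw [if_pos he]; ring
  · rw [if_neg he, MvPolynomial.notMem_support_iff.1 he, mul_zero]

end D
end EigAux
namespace EigAux
variable {k : Type*} [CommRing k]

lemma exists_best (ν : (Fin 2 →₀ ℕ) → ℤ) {g : MvPolynomial (Fin 2) k} (hg : g ≠ 0) :
    ∃ a ∈ g.support, (∀ x ∈ g.support, ν x ≤ ν a) ∧
      (∀ x ∈ g.support, ν x = ν a → x 0 ≤ a 0) := by
  obtain ⟨b, hb, hbmax⟩ := Finset.exists_max_image g.support ν (support_nonempty.2 hg)
  obtain ⟨a, ha, hamax⟩ := Finset.exists_max_image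
    (g.support.filter (fun x => ν x = ν b)) (fun x => x 0)
    ⟨b, Finset.mem_filter.2 ⟨hb, rfl⟩⟩
  rw [Finset.mem_filter] at ha
  refine ⟨a, ha.1, ?_, ?_⟩
  · intro x hx; rw [ha.2]; exact hbmax x hx
  · intro x hx hxa
    exact hamax x (Finset.mem_filter.2 ⟨hx, by rw [hxa, ha.2]⟩)

lemma coeff_mul_best [IsDomain k] (ν : (Fin 2 →₀ ℕ) → ℤ)
    (hadd : ∀ a b : Fin 2 →₀ ℕ, ν (a + b) = ν a + ν b)
    (hinj : ∀ a b : Fin 2 →₀ ℕ, ν a = ν b → a 0 = b 0 → a = b)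
    {g h : MvPolynomial (Fin 2) k} {a b : Fin 2 →₀ ℕ}
    (hag : a ∈ g.support) (hamax : ∀ x ∈ g.support, ν x ≤ ν a)
    (hatie : ∀ x ∈ g.support, ν x = ν a → x 0 ≤ a 0)
    (hbh : b ∈ h.support) (hbmax : ∀ x ∈ h.support, ν x ≤ ν b)
    (hbtie : ∀ x ∈ h.support, ν x = ν b → x 0 ≤ b 0) :
    coeff (a + b) (g * h) = coeff a g * coeff b h := by
  rw [MvPolynomial.coeff_mul]
  apply Finset.sum_eq_single_of_mem (a, b) (Finset.HasAntidiagonal.mem_antidiagonal.2 rfl)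
  rintro ⟨x, y⟩ hxy hne
  rw [Finset.HasAntidiagonal.mem_antidiagonal] at hxy
  by_contra hc
  have hx : x ∈ g.support := mem_support_iff.2 fun h0 => hc (by simp [h0])
  have hy : y ∈ h.support := mem_support_iff.2 fun h0 => hc (by simp [h0])
  have hsum : ν x + ν y = ν a + ν b := by rw [← hadd, ← hadd, hxy]
  have h1 : ν x = ν a ∧ ν y = ν b := by
    have := hamax x hx; have := hbmax y hy; omega
  have hsum0 : x 0 + y 0 = a 0 + b 0 := by
    have := congrArg (fun z : Fin 2 →₀ ℕ => z 0) hxy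
    simpa using this
  have h2 : x 0 = a 0 := by
    have := hatie x hx h1.1; have := hbtie y hy h1.2; omega
  have hxa : x = a := hinj x a h1.1 h2
  have hyb : y = b := by
    have hxyb : x + y = x + b := hxy.trans (by rw [hxa])
    exact add_left_cancel hxyb
  exact hne (by rw [hxa, hyb])

section D2
variable (p q ℓ : ℕ) (A B : ℕ → k)
    (D : Derivation k (MvPolynomial (Fin 2) k) (MvPolynomial (Fin 2) k))
    (hD : ∀ f, D f =
      (p : MvPolynomial (Fin 2) k) * X 0 *
        (∑ i ∈ Finset.range (ℓ + 1), C (A i) * X 0 ^ (q * i) * X 1 ^ (p * i)) *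
          pderiv (0 : Fin 2) f +
      (q : MvPolynomial (Fin 2) k) * X 1 *
        (∑ i ∈ Finset.range (ℓ + 1), C (B i) * X 0 ^ (q * i) * X 1 ^ (p * i)) *
          pderiv (1 : Fin 2) f)

include hD

lemma eigen_supp_le [IsDomain k] (ν : (Fin 2 →₀ ℕ) → ℤ)
    (hadd : ∀ a b : Fin 2 →₀ ℕ, ν (a + b) = ν a + ν b)
    (hinj : ∀ a b : Fin 2 →₀ ℕ, ν a = ν b → a 0 = b 0 → a = b)
    (hsfn : ∀ i, ν (sfn p q i) = 0)
    {f lam : MvPolynomial (Fin 2) k} (hf : f ≠ 0) (heq : D f = lam * f) :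
    ∀ a ∈ lam.support, ν a ≤ 0 := by
  intro a0 ha0
  have hlam : lam ≠ 0 := fun h0 => by simp [h0] at ha0
  obtain ⟨a, ha, hamax, hatie⟩ := exists_best ν hlam
  obtain ⟨b, hb, hbmax, hbtie⟩ := exists_best ν hf
  have hco : coeff (a + b) (lam * f) ≠ 0 := by
    rw [coeff_mul_best ν hadd hinj ha hamax hatie hb hbmax hbtie]
    exact mul_ne_zero (mem_support_iff.1 ha) (mem_support_iff.1 hb)
  have hmem : (a + b) ∈ (D f).support := by
    rw [heq]; exact mem_support_iff.2 hco
  obtain ⟨d, hd, i, _, hde⟩ := D_support p q ℓ A B D hD hmem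
  have h1 : ν a + ν b = ν d := by rw [← hadd, hde, hadd, hsfn, add_zero]
  have h2 := hbmax d hd
  have h3 := hamax a0 ha0
  omega

end D2
end EigAux
namespace EigAux
variable {k : Type*} [CommRing k]

/-- weight function `q·d₁ - p·d₀` -/
def wt (p q : ℕ) (d : Fin 2 →₀ ℕ) : ℤ := (q : ℤ) * d 1 - (p : ℤ) * d 0

lemma wt_add (p q : ℕ) (a b : Fin 2 →₀ ℕ) : wt p q (a + b) = wt p q a + wt p q b := by
  simp only [wt, Finsupp.add_apply]
  push_cast; ring

lemma wt_inj (hq : 1 ≤ q) (a b : Fin 2 →₀ ℕ) (h : wt p q a = wt p q b)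
    (h0 : a 0 = b 0) : a = b := by
  simp only [wt, h0] at h
  have h1 : (q : ℤ) * a 1 = (q : ℤ) * b 1 := by linarith
  have hq0 : (q : ℤ) ≠ 0 := by exact_mod_cast (by omega : q ≠ 0)
  have := mul_left_cancel₀ hq0 h1
  ext j; fin_cases j
  · exact h0
  · exact_mod_cast this

lemma wt_sfn (p q i : ℕ) : wt p q (sfn p q i) = 0 := by
  simp only [wt, sfn_apply0, sfn_apply1]
  push_cast; ring

lemma neg_wt_inj (hq : 1 ≤ q) (a b : Fin 2 →₀ ℕ) (h : - wt p q a = - wt p q b)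
    (h0 : a 0 = b 0) : a = b := wt_inj hq a b (neg_inj.mp h) h0

section D3
variable (p q ℓ : ℕ) (A B : ℕ → k)
    (D : Derivation k (MvPolynomial (Fin 2) k) (MvPolynomial (Fin 2) k))
    (hD : ∀ f, D f =
      (p : MvPolynomial (Fin 2) k) * X 0 *
        (∑ i ∈ Finset.range (ℓ + 1), C (A i) * X 0 ^ (q * i) * X 1 ^ (p * i)) *
          pderiv (0 : Fin 2) f +
      (q : MvPolynomial (Fin 2) k) * X 1 *
        (∑ i ∈ Finset.range (ℓ + 1), C (B i) * X 0 ^ (q * i) * X 1 ^ (p * i)) *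
          pderiv (1 : Fin 2) f)

include hD

/-- the eigenvalue is a polynomial in `t = x^q y^p` : its support consists of
multiples of `(q,p)`. -/
lemma lam_supp [IsDomain k] (hp : 1 ≤ p) (hq : 1 ≤ q) (hpq : Nat.Coprime p q)
    {f lam : MvPolynomial (Fin 2) k} (hf : f ≠ 0) (heq : D f = lam * f) :
    ∀ a ∈ lam.support, ∃ i, a = sfn p q i := by
  intro a ha
  have h1 := eigen_supp_le p q ℓ A B D hD (wt p q) (wt_add p q) (wt_inj hq)
    (wt_sfn p q) hf heq a ha
  have h2 := eigen_supp_le p q ℓ A B D hD (fun d => - wt p q d)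
    (by intro a b; show - wt p q (a+b) = - wt p q a + - wt p q b; rw [wt_add]; ring)
    (neg_wt_inj hq)
    (by intro i; show - wt p q (sfn p q i) = 0; rw [wt_sfn]; ring) hf heq a ha
  have h3 : (q : ℤ) * a 1 = (p : ℤ) * a 0 := by simp only [wt] at h1 h2; linarith
  have h4 : q * a 1 = p * a 0 := by exact_mod_cast h3
  have h5 : q ∣ a 0 := (Nat.Coprime.dvd_of_dvd_mul_right hpq.symm
    ⟨a 1, by rw [mul_comm]; exact h4.symm⟩)
  obtain ⟨i, hi⟩ := h5
  refine ⟨i, eq_sfn_of_apply p q a i (by omega) ?_⟩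
  have : q * a 1 = q * (p * i) := by rw [h4, hi]; ring
  have hq0 : q ≠ 0 := by omega
  exact Nat.eq_of_mul_eq_mul_left (by omega) this

end D3
end EigAux
namespace EigAux
variable {k : Type*} [CommRing k]

lemma lam_coeff_min {p q : ℕ} {lam : MvPolynomial (Fin 2) k}
    (hlam : ∀ a ∈ lam.support, ∃ i, a = sfn p q i)
    {f : MvPolynomial (Fin 2) k} {e : Fin 2 →₀ ℕ}
    (hmin : ∀ d ∈ f.support, ∀ i : ℕ, d + sfn p q i = e → i = 0) :
    coeff e (lam * f) = coeff 0 lam * coeff e f := by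
  rw [MvPolynomial.coeff_mul]
  apply Finset.sum_eq_single_of_mem (0, e) (Finset.HasAntidiagonal.mem_antidiagonal.2 (zero_add e))
  rintro ⟨x, y⟩ hxy hne
  rw [Finset.HasAntidiagonal.mem_antidiagonal] at hxy
  by_contra hc
  have hx : x ∈ lam.support := mem_support_iff.2 fun h0 => hc (by simp [h0])
  have hy : y ∈ f.support := mem_support_iff.2 fun h0 => hc (by simp [h0])
  obtain ⟨i, rfl⟩ := hlam x hx
  have hi0 : i = 0 := hmin y hy i (by rw [add_comm]; exact hxy)
  subst hi0
  rw [sfn_zero] at hxy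
  exact hne (by rw [sfn_zero, ← hxy, zero_add])

section D4
variable (p q ℓ : ℕ) (A B : ℕ → k)
    (D : Derivation k (MvPolynomial (Fin 2) k) (MvPolynomial (Fin 2) k))
    (hD : ∀ f, D f =
      (p : MvPolynomial (Fin 2) k) * X 0 *
        (∑ i ∈ Finset.range (ℓ + 1), C (A i) * X 0 ^ (q * i) * X 1 ^ (p * i)) *
          pderiv (0 : Fin 2) f +
      (q : MvPolynomial (Fin 2) k) * X 1 *
        (∑ i ∈ Finset.range (ℓ + 1), C (B i) * X 0 ^ (q * i) * X 1 ^ (p * i)) *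
          pderiv (1 : Fin 2) f)

include hD

/-- every eigenvector is weighted-homogeneous, with a componentwise-minimal corner -/
lemma homog [IsDomain k] (hp : 1 ≤ p) (hq : 1 ≤ q) (hpq : Nat.Coprime p q)
    (hindep : ∀ m n : ℤ, m • A 0 + n • B 0 = 0 → m = 0 ∧ n = 0)
    {f lam : MvPolynomial (Fin 2) k} (hf : f ≠ 0) (heq : D f = lam * f) :
    ∃ e ∈ f.support, ∀ d ∈ f.support, wt p q d = wt p q e ∧ e 0 ≤ d 0 := by
  classical
  have hlam := lam_supp p q ℓ A B D hD hp hq hpq hf heq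
  -- the minimal point of the line through `d`
  have key : ∀ d ∈ f.support, ∃ e ∈ f.support,
      wt p q e = wt p q d ∧ (∀ x ∈ f.support, wt p q x = wt p q d → e 0 ≤ x 0) ∧
      (((p * e 0 : ℕ) : k) * A 0 + ((q * e 1 : ℕ) : k) * B 0) = coeff 0 lam := by
    intro d hd
    obtain ⟨e, he, hemin⟩ := Finset.exists_min_image
      (f.support.filter (fun x => wt p q x = wt p q d)) (fun x => x 0)
      ⟨d, Finset.mem_filter.2 ⟨hd, rfl⟩⟩
    rw [Finset.mem_filter] at he
    have hmin : ∀ b ∈ f.support, ∀ i : ℕ, b + sfn p q i = e → i = 0 := by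
      intro b hb i hbe
      have hwb : wt p q b = wt p q d := by
        rw [← he.2, ← hbe, wt_add, wt_sfn, add_zero]
      have h0 : e 0 ≤ b 0 := hemin b (Finset.mem_filter.2 ⟨hb, hwb⟩)
      have h1 : b 0 + q * i = e 0 := by
        have := congrArg (fun z : Fin 2 →₀ ℕ => z 0) hbe
        simpa [Finsupp.add_apply, sfn_apply0] using this
      have hqi : q * i = 0 := by omega
      rcases Nat.mul_eq_zero.1 hqi with h | h
      · omega
      · exact h
    have hDc := D_coeff_min p q ℓ A B D hD (g := f) (e := e)
      (fun b hb i hi hbe => hmin b hb i hbe)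
    have hLc := lam_coeff_min hlam hmin
    rw [heq, hLc] at hDc
    have hce : coeff e f ≠ 0 := mem_support_iff.1 he.1
    refine ⟨e, he.1, he.2, fun x hx hwx => hemin x (Finset.mem_filter.2 ⟨hx, hwx⟩), ?_⟩
    exact mul_right_cancel₀ hce hDc.symm
  -- minimal points of any two lines agree
  obtain ⟨d0, hd0⟩ := support_nonempty.2 hf
  obtain ⟨e, he, hwe, hemin, heval⟩ := key d0 hd0
  refine ⟨e, he, fun d hd => ?_⟩
  obtain ⟨e', he', hwe', hemin', heval'⟩ := key d hd
  have hee : e' = e := by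
    have hk : (((p * e' 0 : ℕ) : k) * A 0 + ((q * e' 1 : ℕ) : k) * B 0)
        = (((p * e 0 : ℕ) : k) * A 0 + ((q * e 1 : ℕ) : k) * B 0) := by
      rw [heval, heval']
    have hsm : (((p * e' 0 : ℤ) - (p * e 0 : ℤ)) • A 0
        + (((q * e' 1 : ℤ) - (q * e 1 : ℤ))) • B 0) = 0 := by
      simp only [zsmul_eq_mul]
      push_cast
      push_cast at hk
      linear_combination hk
    obtain ⟨hm, hn⟩ := hindep _ _ hsm
    have h1 : p * e' 0 = p * e 0 := by omega
    have h2 : q * e' 1 = q * e 1 := by omega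
    have h3 : e' 0 = e 0 := Nat.eq_of_mul_eq_mul_left (by omega) h1
    have h4 : e' 1 = e 1 := Nat.eq_of_mul_eq_mul_left (by omega) h2
    ext j; fin_cases j
    · exact h3
    · exact h4
  constructor
  · rw [← hee]; exact hwe'.symm
  · rw [← hee]; exact hemin' d hd rfl

end D4
end EigAux
namespace EigAux
variable {k : Type*} [CommRing k]

lemma isUnit_eq_C [IsDomain k] {g : MvPolynomial (Fin 2) k} (hg : IsUnit g) :
    ∃ c : k, g = C c := by
  obtain ⟨v, hv⟩ := hg.exists_right_inv
  have hg0 : g ≠ 0 := by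
    intro h0; rw [h0, zero_mul] at hv; exact zero_ne_one hv
  have hv0 : v ≠ 0 := by
    intro h0; rw [h0, mul_zero] at hv; exact zero_ne_one hv
  set ν : (Fin 2 →₀ ℕ) → ℤ := fun d => (d 0 : ℤ) + (d 1 : ℤ) with hν
  have hadd : ∀ a b : Fin 2 →₀ ℕ, ν (a + b) = ν a + ν b := by
    intro a b; simp only [hν, Finsupp.add_apply]; push_cast; ring
  have hinj : ∀ a b : Fin 2 →₀ ℕ, ν a = ν b → a 0 = b 0 → a = b := by
    intro a b h h0
    have h1 : a 1 = b 1 := by simp only [hν, h0] at h; omega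
    ext j; fin_cases j
    · exact h0
    · exact h1
  obtain ⟨a, ha, hamax, hatie⟩ := exists_best ν hg0
  obtain ⟨b, hb, hbmax, hbtie⟩ := exists_best ν hv0
  have hco : coeff (a + b) (g * v) ≠ 0 := by
    rw [coeff_mul_best ν hadd hinj ha hamax hatie hb hbmax hbtie]
    exact mul_ne_zero (mem_support_iff.1 ha) (mem_support_iff.1 hb)
  rw [hv] at hco
  have hab : a + b = 0 := by
    by_contra hne
    rw [MvPolynomial.coeff_one, if_neg (fun h => hne h.symm)] at hco
    exact hco rfl
  have ha0 : a = 0 := by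
    ext j
    have := congrArg (fun z : Fin 2 →₀ ℕ => z j) hab
    simp only [Finsupp.add_apply, Finsupp.coe_zero, Pi.zero_apply] at this ⊢
    omega
  have hsupp : ∀ x ∈ g.support, x = 0 := by
    intro x hx
    have h1 := hamax x hx
    rw [ha0] at h1
    simp only [hν, Finsupp.coe_zero, Pi.zero_apply, Nat.cast_zero, add_zero] at h1
    ext j
    fin_cases j <;> simp <;> omega
  refine ⟨coeff 0 g, ?_⟩
  ext d
  rw [MvPolynomial.coeff_C]
  by_cases hd : d = 0
  · rw [hd, if_pos rfl]
  · rw [if_neg (fun h => hd h.symm)]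
    by_contra hc
    exact hd (hsupp d (mem_support_iff.2 hc))

lemma X_mul_of_min (j : Fin 2) {f : MvPolynomial (Fin 2) k}
    (h : ∀ d ∈ f.support, 1 ≤ d j) :
    ∃ f' : MvPolynomial (Fin 2) k, f = X j * f' := by
  refine ⟨∑ d ∈ f.support, monomial (d - Finsupp.single j 1) (coeff d f), ?_⟩
  rw [Finset.mul_sum]
  conv_lhs => rw [← support_sum_monomial_coeff f]
  refine Finset.sum_congr rfl fun d hd => ?_
  have hle : Finsupp.single j 1 ≤ d := by
    rw [Finsupp.single_le_iff]; exact h d hd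
  rw [X, monomial_mul, one_mul, add_tsub_cancel_of_le hle]

end EigAux
namespace EigAux
variable {k : Type*} [CommRing k]

lemma tpow (p q i : ℕ) :
    ((X 0 ^ q * X 1 ^ p : MvPolynomial (Fin 2) k)) ^ i = monomial (sfn p q i) 1 := by
  rw [mul_pow, ← pow_mul, ← pow_mul, mul_comm q i, mul_comm p i, ← monomial_sfn]
  rw [mul_comm i q, mul_comm i p]

lemma phi_monomial (p q : ℕ) (n : ℕ) (a : k) :
    Polynomial.aeval (X 0 ^ q * X 1 ^ p : MvPolynomial (Fin 2) k) (Polynomial.monomial n a)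
      = monomial (sfn p q n) a := by
  rw [Polynomial.aeval_monomial, tpow, algebraMap_eq, C_mul_monomial, mul_one]

lemma phi_coeff (p q : ℕ) (hq : 1 ≤ q) (P : Polynomial k) (n : ℕ) :
    coeff (sfn p q n) (Polynomial.aeval (X 0 ^ q * X 1 ^ p : MvPolynomial (Fin 2) k) P)
      = P.coeff n := by
  conv_lhs => rw [← Polynomial.sum_monomial_eq P]
  rw [Polynomial.sum, map_sum, MvPolynomial.coeff_sum]
  have hterm : ∀ m, coeff (sfn p q n)
      (Polynomial.aeval (X 0 ^ q * X 1 ^ p : MvPolynomial (Fin 2) k)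
        (Polynomial.monomial m (P.coeff m)))
      = if m = n then P.coeff m else 0 := by
    intro m
    rw [phi_monomial, coeff_monomial]
    congr 1
    simp only [eq_iff_iff]
    constructor
    · intro h
      have := congrArg (fun z : Fin 2 →₀ ℕ => z 0) h
      simp only [sfn_apply0] at this
      exact Nat.eq_of_mul_eq_mul_left (by omega) this
    · intro h; rw [h]
  rw [Finset.sum_congr rfl fun m _ => hterm m, Finset.sum_ite_eq' P.support n]
  by_cases hn : n ∈ P.support
  · rw [if_pos hn]
  · rw [if_neg hn, (Polynomial.notMem_support_iff).1 hn]

lemma phi_inj (p q : ℕ) (hq : 1 ≤ q) (P Q : Polynomial k)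
    (h : Polynomial.aeval (X 0 ^ q * X 1 ^ p : MvPolynomial (Fin 2) k) P
       = Polynomial.aeval (X 0 ^ q * X 1 ^ p : MvPolynomial (Fin 2) k) Q) : P = Q := by
  ext n
  rw [← phi_coeff p q hq P n, ← phi_coeff p q hq Q n, h]

end EigAux
namespace EigAux
variable {k : Type*} [CommRing k]

lemma wt_zero_sfn {p q : ℕ} (hq : 1 ≤ q) (hpq : Nat.Coprime p q) {a : Fin 2 →₀ ℕ}
    (h : wt p q a = 0) : ∃ i, a = sfn p q i := by
  have h3 : (q : ℤ) * a 1 = (p : ℤ) * a 0 := by simp only [wt] at h; linarith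
  have h4 : q * a 1 = p * a 0 := by exact_mod_cast h3
  have h5 : q ∣ a 0 := Nat.Coprime.dvd_of_dvd_mul_right hpq.symm
    ⟨a 1, by rw [mul_comm]; exact h4.symm⟩
  obtain ⟨i, hi⟩ := h5
  refine ⟨i, eq_sfn_of_apply p q a i (by omega) ?_⟩
  have : q * a 1 = q * (p * i) := by rw [h4, hi]; ring
  exact Nat.eq_of_mul_eq_mul_left (by omega) this

lemma line0_rep (p q : ℕ) (hq : 1 ≤ q) {g : MvPolynomial (Fin 2) k}
    (hsupp : ∀ a ∈ g.support, ∃ i, a = sfn p q i) :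
    ∃ P : Polynomial k,
      g = Polynomial.aeval (X 0 ^ q * X 1 ^ p : MvPolynomial (Fin 2) k) P := by
  refine ⟨∑ a ∈ g.support, Polynomial.monomial (a 0 / q) (coeff a g), ?_⟩
  rw [map_sum]
  conv_lhs => rw [← support_sum_monomial_coeff g]
  refine Finset.sum_congr rfl fun a ha => ?_
  obtain ⟨i, hai⟩ := hsupp a ha
  rw [phi_monomial, hai, sfn_apply0, Nat.mul_div_cancel_left i (by omega)]

lemma X_not_unit [IsDomain k] (j : Fin 2) : ¬ IsUnit (X j : MvPolynomial (Fin 2) k) := by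
  intro hu
  obtain ⟨c, hc⟩ := isUnit_eq_C hu
  have h1 : coeff (Finsupp.single j 1) (X j : MvPolynomial (Fin 2) k) = 1 := coeff_X_same j
  rw [hc, MvPolynomial.coeff_C, if_neg] at h1
  · exact one_ne_zero h1.symm
  · intro h
    have := congrArg (fun z : Fin 2 →₀ ℕ => z j) h
    simp at this

section D5
variable (p q ℓ : ℕ) (A B : ℕ → k)
    (D : Derivation k (MvPolynomial (Fin 2) k) (MvPolynomial (Fin 2) k))
    (hD : ∀ f, D f =
      (p : MvPolynomial (Fin 2) k) * X 0 *
        (∑ i ∈ Finset.range (ℓ + 1), C (A i) * X 0 ^ (q * i) * X 1 ^ (p * i)) *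
          pderiv (0 : Fin 2) f +
      (q : MvPolynomial (Fin 2) k) * X 1 *
        (∑ i ∈ Finset.range (ℓ + 1), C (B i) * X 0 ^ (q * i) * X 1 ^ (p * i)) *
          pderiv (1 : Fin 2) f)

include hD

lemma Dt : D (X 0 ^ q * X 1 ^ p) =
    Polynomial.aeval (X 0 ^ q * X 1 ^ p : MvPolynomial (Fin 2) k)
      (∑ i ∈ Finset.range (ℓ + 1),
        Polynomial.monomial (i + 1) ((p : k) * (q : k) * (A i + B i))) := by
  have h1 : (X 0 ^ q * X 1 ^ p : MvPolynomial (Fin 2) k) = monomial (sfn p q 1) 1 := by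
    rw [← tpow, pow_one]
  rw [h1, Dmono p q ℓ A B D hD, map_sum]
  refine Finset.sum_congr rfl fun i _ => ?_
  rw [← h1, phi_monomial, sfn_add]
  have h2 : (1 : ℕ) + i = i + 1 := by omega
  rw [h2]
  congr 1
  rw [sfn_apply0, sfn_apply1]
  push_cast
  ring

end D5
end EigAux

open EigAux

/-- For `D = p·x·a₁·∂x + q·y·b₁·∂y` with `a₁ = Σ aᵢᵢ x^{qi} y^{pi}`,
`b₁ = Σ bᵢᵢ x^{qi} y^{pi}`, `q·a_ℓℓ + p·b_ℓℓ ≠ 0`: if `{a₀₀, b₀₀}` is linearly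
independent over `ℚ`, then `D` has only finitely many irreducible eigenvectors up to
scalar multiples. -/
theorem finitely_many_eigenvectors {k : Type*} [Field k] [CharZero k] [IsAlgClosed k]
    (p q ℓ : ℕ) (hp : 1 ≤ p) (hq : 1 ≤ q) (hℓ : 1 ≤ ℓ) (hpq : Nat.Coprime p q)
    (A B : ℕ → k)
    (hlead : (q : k) * A ℓ + (p : k) * B ℓ ≠ 0)
    (hindep : ∀ m n : ℤ, m • A 0 + n • B 0 = 0 → m = 0 ∧ n = 0)
    (D : Derivation k (MvPolynomial (Fin 2) k) (MvPolynomial (Fin 2) k))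
    (hD : ∀ f, D f =
      (p : MvPolynomial (Fin 2) k) * X 0 *
        (∑ i ∈ Finset.range (ℓ + 1), C (A i) * X 0 ^ (q * i) * X 1 ^ (p * i)) *
          pderiv (0 : Fin 2) f +
      (q : MvPolynomial (Fin 2) k) * X 1 *
        (∑ i ∈ Finset.range (ℓ + 1), C (B i) * X 0 ^ (q * i) * X 1 ^ (p * i)) *
          pderiv (1 : Fin 2) f) :
    ∃ S : Finset (MvPolynomial (Fin 2) k),
      ∀ f : MvPolynomial (Fin 2) k, Irreducible f → (∃ lam, D f = lam * f) →
        ∃ g ∈ S, ∃ c : k, f = C c * g := by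
  classical
  set t : MvPolynomial (Fin 2) k := X 0 ^ q * X 1 ^ p with ht
  set RR : Polynomial k := ∑ i ∈ Finset.range (ℓ + 1),
    Polynomial.monomial (i + 1) ((p : k) * (q : k) * (A i + B i)) with hRRdef
  have hAB0 : A 0 + B 0 ≠ 0 := by
    intro h
    have := hindep 1 1 (by simpa using h)
    exact absurd this.1 one_ne_zero
  have hpq0 : (p : k) * (q : k) ≠ 0 := by
    have h1 : ((p * q : ℕ) : k) ≠ 0 := Nat.cast_ne_zero.2 (Nat.mul_ne_zero (by omega) (by omega))
    push_cast at h1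
    exact h1
  have hRRne : RR ≠ 0 := by
    intro h
    have h1 : RR.coeff 1 = (p : k) * (q : k) * (A 0 + B 0) := by
      rw [hRRdef, Polynomial.finset_sum_coeff]
      rw [Finset.sum_eq_single_of_mem 0 (Finset.mem_range.2 (Nat.succ_pos ℓ))]
      · simp [Polynomial.coeff_monomial]
      · intro i _ hne
        rw [Polynomial.coeff_monomial, if_neg (by omega)]
    rw [h, Polynomial.coeff_zero] at h1
    exact (mul_ne_zero hpq0 hAB0) h1.symm
  refine ⟨insert (X 0) (insert (X 1) (RR.roots.toFinset.image fun r => t - C r)), ?_⟩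
  rintro f hirr ⟨lam, heq⟩
  have hf0 : f ≠ 0 := hirr.ne_zero
  obtain ⟨e, he, hkey⟩ := homog p q ℓ A B D hD hp hq hpq hindep hf0 heq
  by_cases he0 : 1 ≤ e 0
  · obtain ⟨f', hf'⟩ := X_mul_of_min (k := k) 0 (fun d hd => le_trans he0 (hkey d hd).2)
    rcases hirr.isUnit_or_isUnit hf' with hu | hu
    · exact absurd hu (X_not_unit 0)
    · obtain ⟨c, hc⟩ := isUnit_eq_C hu
      exact ⟨X 0, Finset.mem_insert_self _ _, c, by rw [hf', hc, mul_comm]⟩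
  by_cases he1 : 1 ≤ e 1
  · have hd1 : ∀ d ∈ f.support, 1 ≤ d 1 := by
      intro d hd
      obtain ⟨hw, h0⟩ := hkey d hd
      simp only [wt] at hw
      by_contra hlt
      have hd10 : d 1 = 0 := by omega
      rw [hd10] at hw
      push_cast at hw
      have h0' : (p : ℤ) * e 0 ≤ (p : ℤ) * d 0 :=
        mul_le_mul_of_nonneg_left (by exact_mod_cast h0) (by positivity)
      have hq1 : (1 : ℤ) ≤ (q : ℤ) * e 1 := by
        have h1 : (1 : ℤ) ≤ (q : ℤ) := by exact_mod_cast hq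
        have h2 : (1 : ℤ) ≤ (e 1 : ℤ) := by exact_mod_cast he1
        nlinarith
      linarith
    obtain ⟨f', hf'⟩ := X_mul_of_min (k := k) 1 hd1
    rcases hirr.isUnit_or_isUnit hf' with hu | hu
    · exact absurd hu (X_not_unit 1)
    · obtain ⟨c, hc⟩ := isUnit_eq_C hu
      exact ⟨X 1, Finset.mem_insert_of_mem (Finset.mem_insert_self _ _), c,
        by rw [hf', hc, mul_comm]⟩
  have he00 : e 0 = 0 := by omega
  have he10 : e 1 = 0 := by omega
  have hwe : wt p q e = 0 := by simp [wt, he00, he10]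
  have hsuppf : ∀ a ∈ f.support, ∃ i, a = sfn p q i := fun a ha =>
    wt_zero_sfn hq hpq (by rw [(hkey a ha).1, hwe])
  obtain ⟨P, hP⟩ := line0_rep p q hq hsuppf
  obtain ⟨Λ, hΛ⟩ := line0_rep p q hq (lam_supp p q ℓ A B D hD hp hq hpq hf0 heq)
  rw [← ht] at hP hΛ
  have hDt : D t = Polynomial.aeval t RR := by
    rw [ht, hRRdef]
    exact Dt p q ℓ A B D hD
  have hDf : D f = Polynomial.aeval t (P.derivative * RR) := by
    rw [hP, Derivation.map_aeval, smul_eq_mul, hDt, ← map_mul]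
  have hkid : P.derivative * RR = Λ * P := by
    apply phi_inj p q hq
    rw [map_mul, map_mul, ← hΛ, ← hP, ← heq, hDf, map_mul]
  have hdeg : P.degree ≠ 0 := by
    intro hd0
    have hPC : P = Polynomial.C (P.coeff 0) := Polynomial.eq_C_of_degree_le_zero (le_of_eq hd0)
    have hfC : f = C (P.coeff 0) := by
      conv_lhs => rw [hP, hPC]
      rw [Polynomial.aeval_C, algebraMap_eq]
    have hc0 : P.coeff 0 ≠ 0 := fun h => hf0 (by rw [hfC, h]; exact map_zero C)
    exact hirr.not_isUnit (by rw [hfC]; exact hc0.isUnit.map C)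
  obtain ⟨r, hr⟩ := IsAlgClosed.exists_root P hdeg
  obtain ⟨Q, hQ⟩ := Polynomial.dvd_iff_isRoot.2 hr
  have haevalXr : Polynomial.aeval t (Polynomial.X - Polynomial.C r) = t - C r := by
    rw [map_sub, Polynomial.aeval_X, Polynomial.aeval_C, algebraMap_eq]
  have hfact : f = (t - C r) * Polynomial.aeval t Q := by
    rw [hP, hQ, map_mul, haevalXr]
  have ht1 : t = monomial (sfn p q 1) 1 := by rw [ht, ← tpow, pow_one]
  have hsfn1ne : ¬((0 : Fin 2 →₀ ℕ) = sfn p q 1) := by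
    intro h
    have := congrArg (fun z : Fin 2 →₀ ℕ => z 0) h
    simp only [Finsupp.coe_zero, Pi.zero_apply, sfn_apply0] at this
    omega
  rcases hirr.isUnit_or_isUnit hfact with hu | hu
  · exfalso
    obtain ⟨c, hc⟩ := isUnit_eq_C hu
    have h1 : coeff (sfn p q 1) (t - C r) = 1 := by
      rw [MvPolynomial.coeff_sub, ht1, coeff_monomial, if_pos rfl,
        MvPolynomial.coeff_C, if_neg hsfn1ne, sub_zero]
    rw [hc, MvPolynomial.coeff_C, if_neg hsfn1ne] at h1
    exact one_ne_zero h1.symm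
  · obtain ⟨c, hc⟩ := isUnit_eq_C hu
    have hQC : Q = Polynomial.C c :=
      phi_inj p q hq _ _ (by rw [hc, Polynomial.aeval_C, algebraMap_eq])
    have hc0 : c ≠ 0 := by
      intro h0
      apply hf0
      rw [hfact, hc, h0, C_0, mul_zero]
    have hPder : P.derivative = Polynomial.C c := by
      rw [hQ, hQC]
      simp [Polynomial.derivative_mul]
    have hroot : RR.eval r = 0 := by
      have hev := congrArg (Polynomial.eval r) hkid
      rw [hPder, hQ, hQC] at hev
      simp only [Polynomial.eval_mul, Polynomial.eval_C, Polynomial.eval_sub,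
        Polynomial.eval_X, sub_self, zero_mul, mul_zero] at hev
      rcases mul_eq_zero.1 hev with h | h
      · exact absurd h hc0
      · exact h
    refine ⟨t - C r, ?_, c, by rw [hfact, hc, mul_comm]⟩
    apply Finset.mem_insert_of_mem
    apply Finset.mem_insert_of_mem
    exact Finset.mem_image.2 ⟨r, Multiset.mem_toFinset.2
      (Polynomial.mem_roots'.2 ⟨hRRne, hroot⟩), rfl⟩
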